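/- Suppose smooth functions V, Z, T̄, S̄ on an interval satisfy S̄' = 1, T̄' = V̄/Z̄, Z̄' = −(S̄/(−S̄R̄ + T̄²))², and V̄' = T̄·Z̄'/S̄ (with Z̄ ≠ 0 and −S̄R̄+T̄² ≠ 0 on the interval). Then the quantity S̄V̄ − T̄Z̄ is constant on the interval. -/

import Mathlib

/-- S̄V̄ − T̄Z̄ is constant along solutions of the barred system. -/
theorem barS_barV_sub_barT_barZ_const (a : ℝ) (ha : 0 < a) (J : Set ℝ) (hJ : Convex ℝ J)
    (Tb Rb Vb Zb : ℝ → ℝ)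
    (Sb : ℝ → ℝ) (hSb : ∀ t, Sb t = 1 / a ^ 2 + t)
    (hZne : ∀ t ∈ J, Zb t ≠ 0)
    (hden : ∀ t ∈ J, -Sb t * Rb t + (Tb t) ^ 2 ≠ 0)
    (hT : ∀ t ∈ J, HasDerivAt Tb (Vb t / Zb t) t)
    (hZ : ∀ t ∈ J, HasDerivAt Zb (-(Sb t / (-Sb t * Rb t + (Tb t) ^ 2)) ^ 2) t)
    (hV : ∀ t ∈ J, HasDerivAt Vb
      (Tb t * (-(Sb t / (-Sb t * Rb t + (Tb t) ^ 2)) ^ 2) / Sb t) t) :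
    ∀ t₁ ∈ J, ∀ t₂ ∈ J,
      Sb t₁ * Vb t₁ - Tb t₁ * Zb t₁ = Sb t₂ * Vb t₂ - Tb t₂ * Zb t₂ := by
  intro t₁ h₁ t₂ h₂
  set f : ℝ → ℝ := fun t => Sb t * Vb t - Tb t * Zb t with hf_def
  have hSeq : Sb = fun t => 1 / a ^ 2 + t := funext hSb
  have hS : ∀ t : ℝ, HasDerivAt Sb 1 t := by
    intro t
    rw [hSeq]
    exact (hasDerivAt_id t).const_add (1 / a ^ 2)
  have hf : ∀ t ∈ J, HasDerivAt f 0 t := by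
    intro t ht
    have h := ((hS t).mul (hV t ht)).sub ((hT t ht).mul (hZ t ht))
    have h' : HasDerivAt f _ t := h
    convert h' using 1
    by_cases hs : Sb t = 0
    · have hW : -(Sb t / (-Sb t * Rb t + Tb t ^ 2)) ^ 2 = 0 := by simp [hs]
      rw [hW]
      field_simp [hZne t ht]
      ring
    · have e1 : Sb t * (Tb t * -(Sb t / (-Sb t * Rb t + Tb t ^ 2)) ^ 2 / Sb t)
          = Tb t * -(Sb t / (-Sb t * Rb t + Tb t ^ 2)) ^ 2 := by
        rw [mul_comm, div_mul_cancel₀ _ hs]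
      rw [e1, div_mul_cancel₀ _ (hZne t ht)]
      ring
  have key : ∀ x ∈ J, ∀ y ∈ J, ‖f y - f x‖ ≤ 0 * ‖y - x‖ := by
    intro x hx y hy
    exact hJ.norm_image_sub_le_of_norm_hasDerivWithin_le
      (fun z hz => (hf z hz).hasDerivWithinAt)
      (fun z hz => by simp) hx hy
  have h0 : f t₁ - f t₂ = 0 :=
    norm_le_zero_iff.mp (by simpa using key t₂ h₂ t₁ h₁)
  have : f t₁ = f t₂ := sub_eq_zero.mp h0
  simpa [hf_def] using this
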